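/- arXiv:1904.00377 — 2 statements merged into one kernel-verified Lean document; each statement's English description precedes it below -/
import Mathlib

section
/- For every Z ≥ 1 and every θ ∈ (0,1) there exists a neural network Φ with input dimension 2 and output dimension 1 such that: (i) L(Φ) ≤ (1/2)·log₂(1/θ) + log₂(Z) + 6; (ii) M(Φ) ≤ 90·(log₂(1/θ) + 2·log₂(Z) + 6); (iii) M_1(Φ) ≤ 16 and M_{L(Φ)}(Φ) ≤ 3; (iv) sup over all a, b ∈ ℝ with |a| ≤ Z and |b| ≤ Z of |a·b − R(Φ)(a,b)| ≤ θ, where R(Φ) denotes the ReLU-realization of Φ over [−Z,Z]². -/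
/-!
Formalization infrastructure: feed-forward ReLU neural networks.

A neural network is a nonempty list of layers.  Each layer stores an
"infinite" matrix `A : ℕ → ℕ → ℝ`, a bias `b : ℕ → ℝ` and the output
dimension `out` of the layer; only the entries of `A` (resp. `b`) inside the
block determined by the input/output dimensions are relevant: they are the
only entries used by the realization and the only entries counted as weights.
-/

noncomputable section

structure Layer where
  A : ℕ → ℕ → ℝ
  b : ℕ → ℝ
  out : ℕ

instance : Inhabited Layer := ⟨⟨fun _ _ => 0, fun _ => 0, 0⟩⟩

/-- A neural network: an input dimension together with a nonempty list of layers. -/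
structure NN where
  inDim : ℕ
  layers : List Layer
  ne : layers ≠ []

namespace NN

/-- number of layers `L(Φ)` -/
def depth (Φ : NN) : ℕ := Φ.layers.length

/-- the dimensions `N_0 = n, N_1, …, N_L` -/
def dims (Φ : NN) : ℕ → ℕ
  | 0 => Φ.inDim
  | ℓ + 1 => (Φ.layers.getD ℓ default).out

/-- output dimension `N_L` -/
def outDim (Φ : NN) : ℕ := Φ.dims Φ.depth

end NN

/-- number of nonzero entries of the `r × c` block of `A` -/
def matCount (A : ℕ → ℕ → ℝ) (r c : ℕ) : ℕ :=
  ((Finset.range r ×ˢ Finset.range c).filter fun p => A p.1 p.2 ≠ 0).card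

/-- number of nonzero entries of the first `r` entries of `b` -/
def vecCount (b : ℕ → ℝ) (r : ℕ) : ℕ :=
  ((Finset.range r).filter fun i => b i ≠ 0).card

/-- `M_ℓ(Φ)`: the number of nonzero weights in layer `ℓ ∈ {1, …, L}` -/
def NN.Msub (Φ : NN) (ℓ : ℕ) : ℕ :=
  matCount (Φ.layers.getD (ℓ - 1) default).A (Φ.dims ℓ) (Φ.dims (ℓ - 1)) +
    vecCount (Φ.layers.getD (ℓ - 1) default).b (Φ.dims ℓ)

/-- `M(Φ)`: the number of nonzero weights of `Φ` -/
def NN.M (Φ : NN) : ℕ := ∑ ℓ ∈ Finset.Icc 1 Φ.depth, Φ.Msub ℓ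

/-- affine map of a layer, contracting over the first `n` coordinates -/
def applyLayer (ly : Layer) (n : ℕ) (v : ℕ → ℝ) : ℕ → ℝ :=
  fun i => (∑ j ∈ Finset.range n, ly.A i j * v j) + ly.b i

/-- forward pass through a list of layers: the ReLU `t ↦ max t 0` is applied
after every layer except the last one. -/
def fwdList : List Layer → ℕ → (ℕ → ℝ) → (ℕ → ℝ)
  | [], _, v => v
  | [ly], n, v => applyLayer ly n v
  | ly :: rest, n, v => fwdList rest ly.out fun i => max (applyLayer ly n v i) 0

def NN.fwd (Φ : NN) (x : ℕ → ℝ) : ℕ → ℝ := fwdList Φ.layers Φ.inDim x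

/-- extension of a finite vector by zero -/
def zext {n : ℕ} (x : Fin n → ℝ) : ℕ → ℝ := fun j => if h : j < n then x ⟨j, h⟩ else 0

/-- The ReLU-realization of `Φ`, as a map `ℝ^n → ℝ^m`.  When `Φ.inDim = n` and
`Φ.outDim = m` this is exactly the realization `R(Φ)`. -/
def NN.realize (Φ : NN) {n m : ℕ} (x : Fin n → ℝ) : Fin m → ℝ :=
  fun i => Φ.fwd (zext x) i.1

end

noncomputable section ScalarMult
namespace ScalarMult

/-! ### The sawtooth construction for approximating the square function -/

def gfun (y : ℝ) : ℝ := 2 * max y 0 - 4 * max (y - 1/2) 0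

def gs : ℕ → ℝ → ℝ
  | 0, x => x
  | s+1, x => gfun (gs s x)

def fs : ℕ → ℝ → ℝ
  | 0, x => x
  | s+1, x => fs s x - gs (s+1) x / 4^(s+1)

lemma gfun_mem {y : ℝ} (h0 : 0 ≤ y) (h1 : y ≤ 1) : 0 ≤ gfun y ∧ gfun y ≤ 1 := by
  have hy : max y 0 = y := max_eq_left h0
  rcases le_total y (1/2) with h | h
  · have h2 : max (y - 1/2) 0 = 0 := max_eq_right (by linarith)
    rw [gfun, hy, h2]; constructor <;> linarith
  · have h2 : max (y - 1/2) 0 = y - 1/2 := max_eq_left (by linarith)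
    rw [gfun, hy, h2]; constructor <;> linarith

lemma gfun_key {y : ℝ} (h0 : 0 ≤ y) (h1 : y ≤ 1) :
    4 * (y - y^2) - gfun y = gfun y - (gfun y)^2 := by
  have hy : max y 0 = y := max_eq_left h0
  rcases le_total y (1/2) with h | h
  · have h2 : max (y - 1/2) 0 = 0 := max_eq_right (by linarith)
    rw [gfun, hy, h2]; ring
  · have h2 : max (y - 1/2) 0 = y - 1/2 := max_eq_left (by linarith)
    rw [gfun, hy, h2]; ring

lemma gs_mem (x : ℝ) (h0 : 0 ≤ x) (h1 : x ≤ 1) (s : ℕ) : 0 ≤ gs s x ∧ gs s x ≤ 1 := by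
  induction s with
  | zero => exact ⟨h0, h1⟩
  | succ s ih => exact gfun_mem ih.1 ih.2

lemma fs_sub_sq {x : ℝ} (h0 : 0 ≤ x) (h1 : x ≤ 1) (s : ℕ) :
    fs s x - x^2 = (gs s x - (gs s x)^2) / 4^s := by
  induction s with
  | zero => simp [fs, gs]
  | succ s ih =>
    have hm := gs_mem x h0 h1 s
    have key := gfun_key hm.1 hm.2
    show fs s x - gs (s+1) x / 4^(s+1) - x^2 = (gs (s+1) x - (gs (s+1) x)^2) / 4^(s+1)
    have hg : gs (s+1) x = gfun (gs s x) := rfl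
    rw [hg, ← key]
    have e : fs s x = x^2 + (gs s x - gs s x ^2)/4^s := by linarith
    rw [e, pow_succ]
    field_simp
    ring

lemma fs_err {x : ℝ} (h0 : 0 ≤ x) (h1 : x ≤ 1) (s : ℕ) :
    0 ≤ fs s x - x^2 ∧ fs s x - x^2 ≤ (1/4)/4^s := by
  have hm := gs_mem x h0 h1 s
  have hb1 : 0 ≤ gs s x - (gs s x)^2 := by nlinarith [hm.1, hm.2]
  have hb2 : gs s x - (gs s x)^2 ≤ 1/4 := by nlinarith [sq_nonneg (gs s x - 1/2)]
  have h4 : (0:ℝ) < 4^s := by positivity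
  rw [fs_sub_sq h0 h1 s]
  exact ⟨div_nonneg hb1 h4.le, (div_le_div_iff_of_pos_right h4).mpr hb2⟩

lemma fs_nonneg {x : ℝ} (h0 : 0 ≤ x) (h1 : x ≤ 1) (s : ℕ) : 0 ≤ fs s x := by
  have := (fs_err h0 h1 s).1
  nlinarith [sq_nonneg x]

lemma step_block {q : ℝ} (h0 : 0 ≤ q) (h1 : q ≤ 1) (s : ℕ) :
    2 * gs s q - 4 * max (gs s q - 1/2) 0 = gs (s+1) q := by
  have hm := (gs_mem q h0 h1 s).1
  show _ = gfun (gs s q)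
  rw [gfun, max_eq_left hm]

lemma max_add_max_neg (t : ℝ) : max t 0 + max (-t) 0 = |t| := by
  rcases le_total 0 t with h | h
  · rw [max_eq_left h, max_eq_right (by linarith), abs_of_nonneg h]; ring
  · rw [max_eq_right h, max_eq_left (by linarith), abs_of_nonpos h]; ring

/-! ### The layers -/

def linLayer (Z : ℝ) : Layer where
  A := fun i j =>
    if i = 0 then (if j ≤ 1 then 1/(2*Z) else 0)
    else if i = 1 then (if j ≤ 1 then -(1/(2*Z)) else 0)
    else if i = 2 then (if j = 0 then 1/Z else 0)
    else if i = 3 then (if j = 0 then -(1/Z) else 0)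
    else if i = 4 then (if j = 1 then 1/Z else 0)
    else if i = 5 then (if j = 1 then -(1/Z) else 0)
    else 0
  b := fun _ => 0
  out := 6

def initLayer : Layer where
  A := fun i j =>
    if i ≤ 2 then (if j ≤ 1 then 1 else 0)
    else if i ≤ 5 then (if j = 2 ∨ j = 3 then 1 else 0)
    else if i ≤ 8 then (if j = 4 ∨ j = 5 then 1 else 0)
    else 0
  b := fun i => if i = 1 ∨ i = 4 ∨ i = 7 then -(1/2) else 0
  out := 9

def stepLayer (t : ℕ) : Layer where
  A := fun i j =>
    if i = 0 ∨ i = 1 then (if j = 0 then 2 else if j = 1 then -4 else 0)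
    else if i = 2 then (if j = 0 then -(2/4^t) else if j = 1 then 4/4^t else if j = 2 then 1 else 0)
    else if i = 3 ∨ i = 4 then (if j = 3 then 2 else if j = 4 then -4 else 0)
    else if i = 5 then (if j = 3 then -(2/4^t) else if j = 4 then 4/4^t else if j = 5 then 1 else 0)
    else if i = 6 ∨ i = 7 then (if j = 6 then 2 else if j = 7 then -4 else 0)
    else if i = 8 then (if j = 6 then -(2/4^t) else if j = 7 then 4/4^t else if j = 8 then 1 else 0)
    else 0
  b := fun i => if i = 1 ∨ i = 4 ∨ i = 7 then -(1/2) else 0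
  out := 9

def outLayer (Z : ℝ) : Layer where
  A := fun i j =>
    if i = 0 then
      (if j = 2 then 2*Z^2 else if j = 5 then -(Z^2/2) else if j = 8 then -(Z^2/2) else 0)
    else 0
  b := fun _ => 0
  out := 1

def theNN (Z : ℝ) (m : ℕ) : NN where
  inDim := 2
  layers := linLayer Z :: initLayer :: (List.map stepLayer (List.range' 1 m) ++ [outLayer Z])
  ne := by simp

/-! ### generic fwdList lemmas -/

lemma fwdList_single (ly : Layer) (n : ℕ) (v : ℕ → ℝ) :
    fwdList [ly] n v = applyLayer ly n v := rfl

lemma fwdList_cons_of_ne (ly : Layer) (l : List Layer) (h : l ≠ []) (n : ℕ) (v : ℕ → ℝ) :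
    fwdList (ly :: l) n v = fwdList l ly.out (fun i => max (applyLayer ly n v i) 0) := by
  cases l with
  | nil => exact absurd rfl h
  | cons a l => rfl

/-! ### weight counts -/

lemma matCount_le (A : ℕ → ℕ → ℝ) (r c : ℕ) : matCount A r c ≤ r * c :=
  le_trans (Finset.card_filter_le _ _) (by simp)

lemma vecCount_le (b : ℕ → ℝ) (r : ℕ) : vecCount b r ≤ r :=
  le_trans (Finset.card_filter_le _ _) (by simp)

lemma vecCount_zero (r : ℕ) : vecCount (fun _ => (0:ℝ)) r = 0 := by
  simp [vecCount]

lemma matCount_out (Z : ℝ) (c : ℕ) : matCount (outLayer Z).A 1 c ≤ 3 := by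
  have hsub : ((Finset.range 1 ×ˢ Finset.range c).filter fun p => (outLayer Z).A p.1 p.2 ≠ 0)
      ⊆ ({(0,2), (0,5), (0,8)} : Finset (ℕ × ℕ)) := by
    rintro ⟨i, j⟩ hp
    simp only [Finset.mem_filter, Finset.mem_product, Finset.mem_range] at hp
    obtain ⟨⟨h1, _⟩, hne⟩ := hp
    have hi : i = 0 := by omega
    subst hi
    simp only [outLayer, if_pos rfl] at hne
    simp only [Finset.mem_insert, Finset.mem_singleton, Prod.mk.injEq]
    by_cases h2 : j = 2
    · tauto
    · rw [if_neg h2] at hne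
      by_cases h5 : j = 5
      · tauto
      · rw [if_neg h5] at hne
        by_cases h8 : j = 8
        · tauto
        · rw [if_neg h8] at hne; exact absurd rfl hne
  exact le_trans (Finset.card_le_card hsub) (by decide)

/-! ### dimensions of `theNN` -/

lemma theNN_layers_getD_last (Z : ℝ) (m : ℕ) :
    (theNN Z m).layers.getD (m + 2) default = outLayer Z := by
  show (List.map stepLayer (List.range' 1 m) ++ [outLayer Z]).getD m default = _
  rw [List.getD_eq_getElem?_getD, List.getElem?_append_right (by simp)]
  simp

lemma theNN_dims_le (Z : ℝ) (m : ℕ) (ℓ : ℕ) : (theNN Z m).dims ℓ ≤ 9 := by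
  cases ℓ with
  | zero => norm_num [NN.dims, theNN]
  | succ ℓ =>
    show ((theNN Z m).layers.getD ℓ default).out ≤ 9
    rw [List.getD_eq_getElem?_getD]
    rcases h : (theNN Z m).layers[ℓ]? with _ | ly
    · simp [default]
    · have hmem : ly ∈ (theNN Z m).layers := List.mem_of_getElem? h
      simp only [theNN, List.mem_cons, List.mem_append, List.mem_map, List.mem_singleton] at hmem
      rcases hmem with h | h | ⟨t, _, h⟩ | h | h
      · subst h; simp [linLayer]
      · subst h; simp [initLayer]
      · subst h; simp [stepLayer]
      · subst h; simp [outLayer]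
      · simp at h

lemma theNN_depth (Z : ℝ) (m : ℕ) : (theNN Z m).depth = m + 3 := by
  simp [NN.depth, theNN]

lemma theNN_Msub_le (Z : ℝ) (m ℓ : ℕ) : (theNN Z m).Msub ℓ ≤ 90 := by
  have h1 := theNN_dims_le Z m ℓ
  have h2 := theNN_dims_le Z m (ℓ - 1)
  calc (theNN Z m).Msub ℓ
      ≤ (theNN Z m).dims ℓ * (theNN Z m).dims (ℓ-1) + (theNN Z m).dims ℓ :=
        Nat.add_le_add (matCount_le _ _ _) (vecCount_le _ _)
    _ ≤ 9 * 9 + 9 := Nat.add_le_add (Nat.mul_le_mul h1 h2) h1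
    _ = 90 := by norm_num

lemma theNN_M_le (Z : ℝ) (m : ℕ) : (theNN Z m).M ≤ 90 * (m + 3) := by
  calc (theNN Z m).M ≤ ∑ ℓ ∈ Finset.Icc 1 (theNN Z m).depth, 90 :=
        Finset.sum_le_sum fun ℓ _ => theNN_Msub_le Z m ℓ
    _ = (theNN Z m).depth * 90 := by rw [Finset.sum_const, Nat.card_Icc]; simp [Nat.smul_one_eq_cast]
    _ = 90 * (m + 3) := by rw [theNN_depth]; ring

lemma theNN_Msub_one (Z : ℝ) (m : ℕ) : (theNN Z m).Msub 1 ≤ 16 := by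
  have hd1 : (theNN Z m).dims 1 = 6 := rfl
  have hd0 : (theNN Z m).dims 0 = 2 := rfl
  have hget : (theNN Z m).layers.getD 0 default = linLayer Z := rfl
  rw [NN.Msub]
  norm_num [hd1, hd0, hget]
  calc matCount (linLayer Z).A 6 2 + vecCount (linLayer Z).b 6
      ≤ 6 * 2 + 0 := Nat.add_le_add (matCount_le _ _ _) (le_of_eq (vecCount_zero 6))
    _ ≤ 16 := by norm_num

lemma theNN_Msub_last (Z : ℝ) (m : ℕ) : (theNN Z m).Msub (m + 3) ≤ 3 := by
  have hget : (theNN Z m).layers.getD (m + 3 - 1) default = outLayer Z :=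
    theNN_layers_getD_last Z m
  have hd : (theNN Z m).dims (m + 3) = 1 := by
    show ((theNN Z m).layers.getD (m + 2) default).out = 1
    rw [theNN_layers_getD_last]; rfl
  rw [NN.Msub, hget, hd]
  calc matCount (outLayer Z).A 1 _ + vecCount (outLayer Z).b 1
      ≤ 3 + 0 := Nat.add_le_add (matCount_out Z _) (le_of_eq (vecCount_zero 1))
    _ = 3 := rfl

lemma theNN_outDim (Z : ℝ) (m : ℕ) : (theNN Z m).outDim = 1 := by
  rw [NN.outDim, theNN_depth]
  show ((theNN Z m).layers.getD (m + 2) default).out = 1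
  rw [theNN_layers_getD_last]; rfl

end ScalarMult

namespace ScalarMult

lemma fs_succ (s : ℕ) (x : ℝ) : fs (s+1) x = fs s x - gs (s+1) x / 4^(s+1) := rfl

lemma main_fwd (Z : ℝ) {U V W : ℝ} (hU0 : 0 ≤ U) (hU1 : U ≤ 1) (hV0 : 0 ≤ V) (hV1 : V ≤ 1)
    (hW0 : 0 ≤ W) (hW1 : W ≤ 1) :
    ∀ (k s : ℕ) (v : ℕ → ℝ),
      v 0 = gs s U → v 1 = max (gs s U - 1/2) 0 → v 2 = fs s U →
      v 3 = gs s V → v 4 = max (gs s V - 1/2) 0 → v 5 = fs s V →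
      v 6 = gs s W → v 7 = max (gs s W - 1/2) 0 → v 8 = fs s W →
      fwdList (List.map stepLayer (List.range' (s+1) k) ++ [outLayer Z]) 9 v 0
        = 2*Z^2 * fs (s+k) U - Z^2/2 * fs (s+k) V - Z^2/2 * fs (s+k) W := by
  intro k
  induction k with
  | zero =>
    intro s v h0 h1 h2 h3 h4 h5 h6 h7 h8
    rw [show List.range' (s+1) 0 = [] from rfl, List.map_nil, List.nil_append, fwdList_single]
    have c : applyLayer (outLayer Z) 9 v 0 = 2*Z^2*v 2 - Z^2/2*v 5 - Z^2/2*v 8 := by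
      norm_num [applyLayer, outLayer, Finset.sum_range_succ] <;> ring
    rw [c, h2, h5, h8, Nat.add_zero]
  | succ k ih =>
    intro s v h0 h1 h2 h3 h4 h5 h6 h7 h8
    rw [List.range'_succ, List.map_cons, List.cons_append,
      fwdList_cons_of_ne _ _ (by simp)]
    -- the U block
    have key0 : applyLayer (stepLayer (s+1)) 9 v 0 = gs (s+1) U := by
      have c : applyLayer (stepLayer (s+1)) 9 v 0 = 2*v 0 - 4*v 1 := by
        norm_num [applyLayer, stepLayer, Finset.sum_range_succ] <;> ring
      rw [c, h0, h1, step_block hU0 hU1 s]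
    have key1 : applyLayer (stepLayer (s+1)) 9 v 1 = gs (s+1) U - 1/2 := by
      have c : applyLayer (stepLayer (s+1)) 9 v 1 = 2*v 0 - 4*v 1 - 1/2 := by
        norm_num [applyLayer, stepLayer, Finset.sum_range_succ] <;> ring
      rw [c, h0, h1]
      have := step_block hU0 hU1 s
      linarith
    have key2 : applyLayer (stepLayer (s+1)) 9 v 2 = fs (s+1) U := by
      have c : applyLayer (stepLayer (s+1)) 9 v 2 = v 2 - (2*v 0 - 4*v 1)/4^(s+1) := by
        norm_num [applyLayer, stepLayer, Finset.sum_range_succ] <;> ring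
      rw [c, h0, h1, h2, step_block hU0 hU1 s, ← fs_succ]
    -- the V block
    have key3 : applyLayer (stepLayer (s+1)) 9 v 3 = gs (s+1) V := by
      have c : applyLayer (stepLayer (s+1)) 9 v 3 = 2*v 3 - 4*v 4 := by
        norm_num [applyLayer, stepLayer, Finset.sum_range_succ] <;> ring
      rw [c, h3, h4, step_block hV0 hV1 s]
    have key4 : applyLayer (stepLayer (s+1)) 9 v 4 = gs (s+1) V - 1/2 := by
      have c : applyLayer (stepLayer (s+1)) 9 v 4 = 2*v 3 - 4*v 4 - 1/2 := by
        norm_num [applyLayer, stepLayer, Finset.sum_range_succ] <;> ring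
      rw [c, h3, h4]
      have := step_block hV0 hV1 s
      linarith
    have key5 : applyLayer (stepLayer (s+1)) 9 v 5 = fs (s+1) V := by
      have c : applyLayer (stepLayer (s+1)) 9 v 5 = v 5 - (2*v 3 - 4*v 4)/4^(s+1) := by
        norm_num [applyLayer, stepLayer, Finset.sum_range_succ] <;> ring
      rw [c, h3, h4, h5, step_block hV0 hV1 s, ← fs_succ]
    -- the W block
    have key6 : applyLayer (stepLayer (s+1)) 9 v 6 = gs (s+1) W := by
      have c : applyLayer (stepLayer (s+1)) 9 v 6 = 2*v 6 - 4*v 7 := by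
        norm_num [applyLayer, stepLayer, Finset.sum_range_succ] <;> ring
      rw [c, h6, h7, step_block hW0 hW1 s]
    have key7 : applyLayer (stepLayer (s+1)) 9 v 7 = gs (s+1) W - 1/2 := by
      have c : applyLayer (stepLayer (s+1)) 9 v 7 = 2*v 6 - 4*v 7 - 1/2 := by
        norm_num [applyLayer, stepLayer, Finset.sum_range_succ] <;> ring
      rw [c, h6, h7]
      have := step_block hW0 hW1 s
      linarith
    have key8 : applyLayer (stepLayer (s+1)) 9 v 8 = fs (s+1) W := by
      have c : applyLayer (stepLayer (s+1)) 9 v 8 = v 8 - (2*v 6 - 4*v 7)/4^(s+1) := by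
        norm_num [applyLayer, stepLayer, Finset.sum_range_succ] <;> ring
      rw [c, h6, h7, h8, step_block hW0 hW1 s, ← fs_succ]
    have hidx : s + 1 + k = s + (k + 1) := by omega
    rw [← hidx]
    refine ih (s+1) _ ?_ ?_ ?_ ?_ ?_ ?_ ?_ ?_ ?_
    · rw [key0]; exact max_eq_left (gs_mem U hU0 hU1 (s+1)).1
    · rw [key1]
    · rw [key2]; exact max_eq_left (fs_nonneg hU0 hU1 (s+1))
    · rw [key3]; exact max_eq_left (gs_mem V hV0 hV1 (s+1)).1
    · rw [key4]
    · rw [key5]; exact max_eq_left (fs_nonneg hV0 hV1 (s+1))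
    · rw [key6]; exact max_eq_left (gs_mem W hW0 hW1 (s+1)).1
    · rw [key7]
    · rw [key8]; exact max_eq_left (fs_nonneg hW0 hW1 (s+1))

end ScalarMult

namespace ScalarMult

lemma realize_eq (Z : ℝ) (hZ : 0 < Z) (m : ℕ) (a b : ℝ) (ha : |a| ≤ Z) (hb : |b| ≤ Z) :
    ((theNN Z m).realize ![a, b] : Fin 1 → ℝ) 0
      = 2*Z^2 * fs m (|1/(2*Z)*a + 1/(2*Z)*b|)
        - Z^2/2 * fs m (|1/Z*a|) - Z^2/2 * fs m (|1/Z*b|) := by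
  set U := |1/(2*Z)*a + 1/(2*Z)*b| with hUdef
  set V := |1/Z*a| with hVdef
  set W := |1/Z*b| with hWdef
  have hZ' : (0:ℝ) < 1/(2*Z) := by positivity
  have hZ'' : (0:ℝ) < 1/Z := by positivity
  have hU0 : 0 ≤ U := abs_nonneg _
  have hV0 : 0 ≤ V := abs_nonneg _
  have hW0 : 0 ≤ W := abs_nonneg _
  have hU1 : U ≤ 1 := by
    have h1 : U ≤ |1/(2*Z)*a| + |1/(2*Z)*b| := abs_add_le _ _
    have h2 : |1/(2*Z)*a| = 1/(2*Z)*|a| := by rw [abs_mul, abs_of_pos hZ']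
    have h3 : |1/(2*Z)*b| = 1/(2*Z)*|b| := by rw [abs_mul, abs_of_pos hZ']
    have h4 : 1/(2*Z)*|a| ≤ 1/(2*Z)*Z := by nlinarith
    have h5 : 1/(2*Z)*|b| ≤ 1/(2*Z)*Z := by nlinarith
    have h6 : 1/(2*Z)*Z = 1/2 := by field_simp
    linarith
  have hV1 : V ≤ 1 := by
    have h2 : V = 1/Z*|a| := by rw [hVdef, abs_mul, abs_of_pos hZ'']
    have h4 : 1/Z*|a| ≤ 1/Z*Z := by nlinarith
    have h6 : 1/Z*Z = 1 := by field_simp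
    linarith
  have hW1 : W ≤ 1 := by
    have h2 : W = 1/Z*|b| := by rw [hWdef, abs_mul, abs_of_pos hZ'']
    have h4 : 1/Z*|b| ≤ 1/Z*Z := by nlinarith
    have h6 : 1/Z*Z = 1 := by field_simp
    linarith
  -- inputs
  set x : ℕ → ℝ := zext ![a, b] with hxdef
  have hxa : x 0 = a := by simp [hxdef, zext]
  have hxb : x 1 = b := by
    show zext ![a,b] 1 = b
    simp [zext]
  -- first layer
  set v1 : ℕ → ℝ := fun i => max (applyLayer (linLayer Z) 2 x i) 0 with hv1
  have l0 : applyLayer (linLayer Z) 2 x 0 = 1/(2*Z)*a + 1/(2*Z)*b := by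
    norm_num [applyLayer, linLayer, Finset.sum_range_succ, hxa, hxb] <;> ring
  have l1 : applyLayer (linLayer Z) 2 x 1 = -(1/(2*Z)*a + 1/(2*Z)*b) := by
    norm_num [applyLayer, linLayer, Finset.sum_range_succ, hxa, hxb] <;> ring
  have l2 : applyLayer (linLayer Z) 2 x 2 = 1/Z*a := by
    norm_num [applyLayer, linLayer, Finset.sum_range_succ, hxa, hxb] <;> ring
  have l3 : applyLayer (linLayer Z) 2 x 3 = -(1/Z*a) := by
    norm_num [applyLayer, linLayer, Finset.sum_range_succ, hxa, hxb] <;> ring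
  have l4 : applyLayer (linLayer Z) 2 x 4 = 1/Z*b := by
    norm_num [applyLayer, linLayer, Finset.sum_range_succ, hxa, hxb] <;> ring
  have l5 : applyLayer (linLayer Z) 2 x 5 = -(1/Z*b) := by
    norm_num [applyLayer, linLayer, Finset.sum_range_succ, hxa, hxb] <;> ring
  have s01 : v1 0 + v1 1 = U := by
    show max _ 0 + max _ 0 = U
    rw [l0, l1, max_add_max_neg]
  have s23 : v1 2 + v1 3 = V := by
    show max _ 0 + max _ 0 = V
    rw [l2, l3, max_add_max_neg]
  have s45 : v1 4 + v1 5 = W := by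
    show max _ 0 + max _ 0 = W
    rw [l4, l5, max_add_max_neg]
  -- second layer
  set v2 : ℕ → ℝ := fun i => max (applyLayer initLayer 6 v1 i) 0 with hv2
  have i0 : applyLayer initLayer 6 v1 0 = v1 0 + v1 1 := by
    norm_num [applyLayer, initLayer, Finset.sum_range_succ] <;> ring
  have i1 : applyLayer initLayer 6 v1 1 = v1 0 + v1 1 - 1/2 := by
    norm_num [applyLayer, initLayer, Finset.sum_range_succ] <;> ring
  have i2 : applyLayer initLayer 6 v1 2 = v1 0 + v1 1 := by
    norm_num [applyLayer, initLayer, Finset.sum_range_succ] <;> ring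
  have i3 : applyLayer initLayer 6 v1 3 = v1 2 + v1 3 := by
    norm_num [applyLayer, initLayer, Finset.sum_range_succ] <;> ring
  have i4 : applyLayer initLayer 6 v1 4 = v1 2 + v1 3 - 1/2 := by
    norm_num [applyLayer, initLayer, Finset.sum_range_succ] <;> ring
  have i5 : applyLayer initLayer 6 v1 5 = v1 2 + v1 3 := by
    norm_num [applyLayer, initLayer, Finset.sum_range_succ] <;> ring
  have i6 : applyLayer initLayer 6 v1 6 = v1 4 + v1 5 := by
    norm_num [applyLayer, initLayer, Finset.sum_range_succ] <;> ring
  have i7 : applyLayer initLayer 6 v1 7 = v1 4 + v1 5 - 1/2 := by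
    norm_num [applyLayer, initLayer, Finset.sum_range_succ] <;> ring
  have i8 : applyLayer initLayer 6 v1 8 = v1 4 + v1 5 := by
    norm_num [applyLayer, initLayer, Finset.sum_range_succ] <;> ring
  -- unfold realize/fwd
  show (theNN Z m).fwd x 0 = _
  rw [NN.fwd]
  show fwdList (linLayer Z :: initLayer ::
    (List.map stepLayer (List.range' 1 m) ++ [outLayer Z])) 2 x 0 = _
  rw [fwdList_cons_of_ne _ _ (by simp), fwdList_cons_of_ne _ _ (by simp)]
  show fwdList (List.map stepLayer (List.range' 1 m) ++ [outLayer Z]) 9 v2 0 = _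
  have hfin := main_fwd Z hU0 hU1 hV0 hV1 hW0 hW1 m 0 v2
    (by show max _ 0 = _; rw [i0, s01]; exact max_eq_left hU0)
    (by show max _ 0 = _; rw [i1, s01]; rfl)
    (by show max _ 0 = _; rw [i2, s01]; exact max_eq_left hU0)
    (by show max _ 0 = _; rw [i3, s23]; exact max_eq_left hV0)
    (by show max _ 0 = _; rw [i4, s23]; rfl)
    (by show max _ 0 = _; rw [i5, s23]; exact max_eq_left hV0)
    (by show max _ 0 = _; rw [i6, s45]; exact max_eq_left hW0)
    (by show max _ 0 = _; rw [i7, s45]; rfl)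
    (by show max _ 0 = _; rw [i8, s45]; exact max_eq_left hW0)
  rw [show (0:ℕ) + 1 = 1 from rfl] at hfin
  rw [hfin]
  norm_num

end ScalarMult

namespace ScalarMult

set_option maxHeartbeats 1000000 in
lemma theNN_approx (Z : ℝ) (hZ : 0 < Z) (m : ℕ) (θ : ℝ) (hθ : 0 < θ)
    (hZθ : Z^2 ≤ θ * 4^m) (a b : ℝ) (ha : |a| ≤ Z) (hb : |b| ≤ Z) :
    |a * b - ((theNN Z m).realize ![a, b] : Fin 1 → ℝ) 0| ≤ θ := by
  rw [realize_eq Z hZ m a b ha hb]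
  set U := |1/(2*Z)*a + 1/(2*Z)*b| with hUdef
  set V := |1/Z*a| with hVdef
  set W := |1/Z*b| with hWdef
  have hZ' : (0:ℝ) < 1/(2*Z) := by positivity
  have hZ'' : (0:ℝ) < 1/Z := by positivity
  have hU0 : 0 ≤ U := abs_nonneg _
  have hV0 : 0 ≤ V := abs_nonneg _
  have hW0 : 0 ≤ W := abs_nonneg _
  have hU1 : U ≤ 1 := by
    have h1 : U ≤ |1/(2*Z)*a| + |1/(2*Z)*b| := abs_add_le _ _
    have h2 : |1/(2*Z)*a| = 1/(2*Z)*|a| := by rw [abs_mul, abs_of_pos hZ']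
    have h3 : |1/(2*Z)*b| = 1/(2*Z)*|b| := by rw [abs_mul, abs_of_pos hZ']
    have h4 : 1/(2*Z)*|a| ≤ 1/(2*Z)*Z := by nlinarith
    have h5 : 1/(2*Z)*|b| ≤ 1/(2*Z)*Z := by nlinarith
    have h6 : 1/(2*Z)*Z = 1/2 := by field_simp
    linarith
  have hV1 : V ≤ 1 := by
    have h2 : V = 1/Z*|a| := by rw [hVdef, abs_mul, abs_of_pos hZ'']
    have h4 : 1/Z*|a| ≤ 1/Z*Z := by nlinarith
    have h6 : 1/Z*Z = 1 := by field_simp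
    linarith
  have hW1 : W ≤ 1 := by
    have h2 : W = 1/Z*|b| := by rw [hWdef, abs_mul, abs_of_pos hZ'']
    have h4 : 1/Z*|b| ≤ 1/Z*Z := by nlinarith
    have h6 : 1/Z*Z = 1 := by field_simp
    linarith
  have eU := fs_err hU0 hU1 m
  have eV := fs_err hV0 hV1 m
  have eW := fs_err hW0 hW1 m
  have hab : a*b = 2*Z^2*U^2 - Z^2/2*V^2 - Z^2/2*W^2 := by
    have u2 : U^2 = (1/(2*Z)*a + 1/(2*Z)*b)^2 := sq_abs _
    have v2 : V^2 = (1/Z*a)^2 := sq_abs _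
    have w2 : W^2 = (1/Z*b)^2 := sq_abs _
    rw [u2, v2, w2]
    field_simp
    ring
  have h4m : (0:ℝ) < (4:ℝ)^m := by positivity
  have key : Z^2 * ((1/4)/4^m) ≤ θ/4 := by
    have e : Z^2*((1/4)/(4:ℝ)^m) = Z^2/(4*4^m) := by ring
    rw [e, div_le_iff₀ (by positivity)]
    nlinarith
  have b1 : 0 ≤ Z^2 * (fs m U - U^2) := mul_nonneg (by positivity) eU.1
  have b2 : Z^2 * (fs m U - U^2) ≤ Z^2*((1/4)/4^m) :=
    mul_le_mul_of_nonneg_left eU.2 (by positivity)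
  have b3 : 0 ≤ Z^2 * (fs m V - V^2) := mul_nonneg (by positivity) eV.1
  have b4 : Z^2 * (fs m V - V^2) ≤ Z^2*((1/4)/4^m) :=
    mul_le_mul_of_nonneg_left eV.2 (by positivity)
  have b5 : 0 ≤ Z^2 * (fs m W - W^2) := mul_nonneg (by positivity) eW.1
  have b6 : Z^2 * (fs m W - W^2) ≤ Z^2*((1/4)/4^m) :=
    mul_le_mul_of_nonneg_left eW.2 (by positivity)
  rw [hab, abs_le]
  constructor <;> nlinarith

end ScalarMult


/-- approximate scalar multiplication by ReLU networks.
For every `Z ≥ 1` and `θ ∈ (0,1)` there exists a network `Φ` with input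
dimension 2 and output dimension 1 such that
(i) `L(Φ) ≤ (1/2) log₂(1/θ) + log₂ Z + 6`;
(ii) `M(Φ) ≤ 90 (log₂(1/θ) + 2 log₂ Z + 6)`;
(iii) `M_1(Φ) ≤ 16` and `M_{L(Φ)}(Φ) ≤ 3`;
(iv) `sup_{|a|,|b| ≤ Z} |a b − R(Φ)(a,b)| ≤ θ`. -/
theorem scalar_multiplication_network (Z : ℝ) (hZ : 1 ≤ Z) (θ : ℝ)
    (hθ0 : 0 < θ) (hθ1 : θ < 1) :
    ∃ Φ : NN, Φ.inDim = 2 ∧ Φ.outDim = 1 ∧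
      (Φ.depth : ℝ) ≤ 1 / 2 * Real.logb 2 (1 / θ) + Real.logb 2 Z + 6 ∧
      (Φ.M : ℝ) ≤ 90 * (Real.logb 2 (1 / θ) + 2 * Real.logb 2 Z + 6) ∧
      Φ.Msub 1 ≤ 16 ∧ Φ.Msub Φ.depth ≤ 3 ∧
      ∀ a b : ℝ, |a| ≤ Z → |b| ≤ Z →
        |a * b - (Φ.realize ![a, b] : Fin 1 → ℝ) 0| ≤ θ := by
  have hZ0 : (0:ℝ) < Z := by linarith
  set X1 := Real.logb 2 (1/θ) with hX1def
  set X2 := Real.logb 2 Z with hX2def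
  have hX1 : 0 < X1 := Real.logb_pos (by norm_num) (by rw [lt_div_iff₀ hθ0]; linarith)
  have hX2 : 0 ≤ X2 := Real.logb_nonneg (by norm_num) hZ
  set m := ⌈X1/2 + X2⌉₊ with hmdef
  have hm1 : X1/2 + X2 ≤ (m:ℝ) := Nat.le_ceil _
  have hm2 : (m:ℝ) ≤ X1/2 + X2 + 1 := (Nat.ceil_lt_add_one (by positivity)).le
  have hZθ : Z^2 ≤ θ * 4^m := by
    have e1 : (2:ℝ) ^ (X1 + 2*X2) = (1/θ) * Z^2 := by
      rw [Real.rpow_add (by norm_num : (0:ℝ) < 2)]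
      rw [hX1def, hX2def, Real.rpow_logb (by norm_num) (by norm_num) (by positivity)]
      congr 1
      rw [two_mul, Real.rpow_add (by norm_num : (0:ℝ) < 2),
        Real.rpow_logb (by norm_num) (by norm_num) hZ0]
      ring
    have e2 : ((4:ℝ))^m = (2:ℝ)^(((2*m : ℕ)) : ℝ) := by
      rw [Real.rpow_natCast, pow_mul]; norm_num
    have e3 : (2:ℝ)^(X1 + 2*X2) ≤ (2:ℝ)^(((2*m : ℕ)) : ℝ) :=
      Real.rpow_le_rpow_of_exponent_le (by norm_num) (by push_cast; linarith)
    have e4 : Z^2/θ ≤ (4:ℝ)^m := by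
      rw [e2]
      calc Z^2/θ = (2:ℝ)^(X1 + 2*X2) := by rw [e1]; ring
        _ ≤ _ := e3
    rw [div_le_iff₀ hθ0] at e4
    linarith
  refine ⟨ScalarMult.theNN Z m, rfl, ScalarMult.theNN_outDim Z m, ?_, ?_,
    ScalarMult.theNN_Msub_one Z m, ?_, ?_⟩
  · rw [ScalarMult.theNN_depth]; push_cast; linarith
  · have h := ScalarMult.theNN_M_le Z m
    calc ((ScalarMult.theNN Z m).M : ℝ) ≤ ((90*(m+3) : ℕ) : ℝ) := by exact_mod_cast h
      _ = 90*((m:ℝ)+3) := by push_cast; ring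
      _ ≤ 90*(X1 + 2*X2 + 6) := by linarith
  · rw [ScalarMult.theNN_depth]; exact ScalarMult.theNN_Msub_last Z m
  · intro a b ha hb
    exact ScalarMult.theNN_approx Z hZ0 m θ hθ0 hZθ a b ha hb
end ScalarMult
end

section
/- Let V be a real normed vector space, let N ∈ ℕ, and let X ⊆ V be a nonempty compact subset. Define the Kolmogorov N-width W_N(X) := inf over all linear subspaces V_N of V with dim(V_N) ≤ N of sup_{x ∈ X} dist(x, V_N), and the inner N-width W̄_N(X) := inf over all linear subspaces of the form V_N = span{x_1,…,x_N} with x_1,…,x_N ∈ X of sup_{x ∈ X} dist(x, V_N). Then W̄_N(X) ≤ (N+1)·W_N(X). -/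
noncomputable section

/-- the Kolmogorov `N`-width `W_N(X)`: the infimum, over all linear subspaces
`V_N ⊆ V` with `dim(V_N) ≤ N`, of `sup_{x ∈ X} dist(x, V_N)` -/
def kolWidth (V : Type*) [NormedAddCommGroup V] [NormedSpace ℝ V]
    (N : ℕ) (X : Set V) : ℝ :=
  sInf {r : ℝ | ∃ S : Submodule ℝ V, FiniteDimensional ℝ S ∧
    Module.finrank ℝ S ≤ N ∧
    r = ⨆ x : X, Metric.infDist (x : V) (S : Set V)}

/-- the inner `N`-width `W̄_N(X)`: the infimum, over all subspaces spanned by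
`N` elements of `X`, of `sup_{x ∈ X} dist(x, V_N)` -/
def innerWidth (V : Type*) [NormedAddCommGroup V] [NormedSpace ℝ V]
    (N : ℕ) (X : Set V) : ℝ :=
  sInf {r : ℝ | ∃ xs : Fin N → V, (∀ i, xs i ∈ X) ∧
    r = ⨆ x : X, Metric.infDist (x : V)
      ((Submodule.span ℝ (Set.range xs) : Submodule ℝ V) : Set V)}

end


open Metric Submodule Module Set Matrix

lemma width_arith {N n r ε ε' δ : ℝ} (hr : 0 ≤ r) (hεpos : 0 < ε) (hε1 : ε ≤ 1)
    (hε'pos : 0 < ε') (hε'1 : ε' ≤ 1) (hn0 : 0 ≤ n) (hnN' : n ≤ N)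
    (hε2 : ε * (2 * (2 * N + 1)) ≤ δ) (hε'2 : ε' * (2 * (N + 1) * (r + 1)) ≤ δ) :
    (r + ε) + n * ((1 + ε') * (r + ε)) ≤ (n + 1) * r + δ := by
  have h_a : ε * (1 + n) ≤ δ / 2 := by nlinarith
  have h_b : n * (ε' * (r + ε)) ≤ δ / 2 := by
    have p1 : ε' * (r + ε) ≤ ε' * (r + 1) :=
      mul_le_mul_of_nonneg_left (by linarith) hε'pos.le
    have p2 : n * (ε' * (r + ε)) ≤ N * (ε' * (r + 1)) :=
      mul_le_mul hnN' p1 (by positivity) (by linarith)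
    nlinarith
  nlinarith

set_option maxHeartbeats 1000000 in
lemma core_lemma {V : Type*} [NormedAddCommGroup V] [NormedSpace ℝ V]
    {X : Set V} (hne : X.Nonempty) {C : ℝ} (hC : ∀ x ∈ X, ‖x‖ ≤ C) (N : ℕ) :
    ∀ n : ℕ, n ≤ N → ∀ S : Submodule ℝ V, FiniteDimensional ℝ S →
      Module.finrank ℝ S = n →
      ∀ r : ℝ, 0 ≤ r → (∀ x ∈ X, Metric.infDist x (S : Set V) ≤ r) →
      ∀ δ : ℝ, 0 < δ →
      ∃ xs : Fin N → V, (∀ i, xs i ∈ X) ∧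
        ∀ x ∈ X, Metric.infDist x
          ((Submodule.span ℝ (Set.range xs) : Submodule ℝ V) : Set V)
          ≤ ((n : ℝ) + 1) * r + δ := by
  classical
  intro n
  induction n using Nat.strong_induction_on with
  | _ n IH =>
  intro hnN S hfd hrank r hr hle δ hδ
  haveI := hfd
  haveI : Nonempty X := hne.to_subtype
  have hnN' : (n : ℝ) ≤ N := by exact_mod_cast hnN
  set ε : ℝ := min 1 (δ / (2 * (2 * N + 1))) with hε_def
  have hεpos : 0 < ε := lt_min one_pos (by positivity)
  have hε1 : ε ≤ 1 := min_le_left _ _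
  have hε2 : ε * (2 * (2 * N + 1)) ≤ δ := by
    have := min_le_right (1:ℝ) (δ / (2 * (2 * N + 1)))
    rw [le_div_iff₀ (by positivity)] at this
    exact this
  -- approximate projection
  have hproj : ∀ x : X, ∃ s : S, ‖(x : V) - s‖ < r + ε := by
    intro x
    have h1 : Metric.infDist (x : V) (S : Set V) < r + ε :=
      lt_of_le_of_lt (hle x x.2) (by linarith)
    obtain ⟨s, hsS, hs⟩ := (Metric.infDist_lt_iff ⟨0, S.zero_mem⟩).mp h1
    exact ⟨⟨s, hsS⟩, by rwa [← dist_eq_norm]⟩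
  choose p hp using hproj
  set T : Submodule ℝ V := Submodule.span ℝ (Set.range fun x : X => (p x : V)) with hT_def
  have hTS : T ≤ S := span_le.mpr (range_subset_iff.mpr fun x => (p x).2)
  haveI : FiniteDimensional ℝ T := Submodule.finiteDimensional_of_le hTS
  by_cases hdim : finrank ℝ T < n
  · -- degenerate case: recurse on the smaller subspace spanned by the projections
    have h1 : ∀ x ∈ X, Metric.infDist x (T : Set V) ≤ r + ε := by
      intro x hx
      refine le_trans (Metric.infDist_le_dist_of_mem
        (subset_span (mem_range_self (⟨x, hx⟩ : X)))) ?_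
      rw [dist_eq_norm]
      exact le_of_lt (hp ⟨x, hx⟩)
    obtain ⟨xs, hxs, hb⟩ := IH (finrank ℝ T) hdim (le_trans (Nat.le_of_lt hdim) hnN)
      T inferInstance rfl (r + ε) (by linarith) h1 (δ / 2) (by linarith)
    refine ⟨xs, hxs, fun x hx => le_trans (hb x hx) ?_⟩
    have h2 : (finrank ℝ T : ℝ) + 1 ≤ n := by exact_mod_cast hdim
    have h3 : ((finrank ℝ T : ℝ) + 1) * (r + ε) ≤ (n : ℝ) * (r + ε) :=
      mul_le_mul_of_nonneg_right h2 (by linarith)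
    have h4 : (n : ℝ) * ε ≤ δ / 2 := by nlinarith
    nlinarith
  · -- main case
    have hTn : finrank ℝ T = n := le_antisymm (hrank ▸ Submodule.finrank_mono hTS)
      (not_lt.mp hdim)
    have hTSeq : T = S := Submodule.eq_of_le_of_finrank_le hTS (by rw [hTn, hrank])
    have hspan : Submodule.span ℝ (Set.range p) = (⊤ : Submodule ℝ S) := by
      apply Submodule.map_injective_of_injective S.injective_subtype
      rw [Submodule.map_span, Submodule.map_top, Submodule.range_subtype, ← Set.range_comp]
      exact hTSeq
    have htop : (⊤ : Submodule ℝ S) ≤ Submodule.span ℝ (Set.range p) := hspan.ge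
    set B0 := Basis.ofSpan htop with hB0
    haveI := FiniteDimensional.fintypeBasisIndex B0
    have hcard : Fintype.card ((linearIndepOn_empty ℝ (id : S → S)).extend
        (Set.empty_subset (Set.range p))) = n := by
      rw [← Module.finrank_eq_card_basis B0, hrank]
    set e := Fintype.equivFinOfCardEq hcard with he
    set B := B0.reindex e with hB
    have hBmem : ∀ j : Fin n, (B j : S) ∈ Set.range p := by
      intro j
      have h1 : B j = ((e.symm j : _) : S) := by
        rw [hB, Module.Basis.reindex_apply, hB0, Basis.ofSpan_apply_self]
      rw [h1]
      exact (linearIndepOn_empty ℝ (id : S → S)).extend_subset (Set.empty_subset _) (e.symm j).2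
    choose t0 ht0 using hBmem
    set A : (Fin n → X) → Matrix (Fin n) (Fin n) ℝ :=
      fun t => Matrix.of fun i j => B.equivFun (p (t j)) i with hA
    have hA1 : A t0 = 1 := by
      ext i j
      simp only [hA, Matrix.of_apply, ht0, Basis.equivFun_self, Matrix.one_apply]
      exact if_congr eq_comm rfl rfl
    -- bounds
    have hC0 : 0 ≤ C := le_trans (norm_nonneg _) (hC hne.choose hne.choose_spec)
    set L := LinearMap.toContinuousLinearMap (B.equivFun : S →ₗ[ℝ] Fin n → ℝ) with hL
    have hpnorm : ∀ x : X, ‖p x‖ ≤ C + (r + ε) := by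
      intro x
      have h1 : ((p x : V)) = (x : V) - ((x : V) - p x) := by abel
      calc ‖p x‖ = ‖(p x : V)‖ := rfl
        _ = ‖(x : V) - ((x : V) - p x)‖ := by rw [← h1]
        _ ≤ ‖(x : V)‖ + ‖(x : V) - p x‖ := norm_sub_le _ _
        _ ≤ C + (r + ε) := add_le_add (hC x x.2) (hp x).le
    set c0 : ℝ := ‖L‖ * (C + (r + ε)) with hc0
    have hentry : ∀ t : Fin n → X, ∀ i j, |A t i j| ≤ c0 := by
      intro t i j
      calc |A t i j| = ‖(B.equivFun (p (t j))) i‖ := (Real.norm_eq_abs _).symm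
        _ ≤ ‖B.equivFun (p (t j))‖ := norm_le_pi_norm _ i
        _ = ‖L (p (t j))‖ := rfl
        _ ≤ ‖L‖ * ‖p (t j)‖ := L.le_opNorm _
        _ ≤ c0 := mul_le_mul_of_nonneg_left (hpnorm _) (norm_nonneg L)
    set Dset : Set ℝ := Set.range fun t : Fin n → X => |(A t).det| with hDset
    have hbdd : BddAbove Dset := by
      refine ⟨(n.factorial : ℝ) * c0 ^ n, ?_⟩
      rintro _ ⟨t, rfl⟩
      have := Matrix.det_le (A := A t) (abv := AbsoluteValue.abs (S := ℝ))
        (x := c0) (fun i j => hentry t i j)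
      simpa [Fintype.card_fin, nsmul_eq_mul] using this
    have hmem1 : (1 : ℝ) ∈ Dset := ⟨t0, by show |(A t0).det| = 1; rw [hA1, Matrix.det_one, abs_one]⟩
    set D := sSup Dset with hD
    have hD1 : 1 ≤ D := le_csSup hbdd hmem1
    set ε' : ℝ := min 1 (δ / (2 * (N + 1) * (r + 1))) with hε'_def
    have hε'pos : 0 < ε' := lt_min one_pos (by positivity)
    have hε'1 : ε' ≤ 1 := min_le_left _ _
    have hε'2 : ε' * (2 * (N + 1) * (r + 1)) ≤ δ := by
      have := min_le_right (1:ℝ) (δ / (2 * (N + 1) * (r + 1)))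
      rw [le_div_iff₀ (by positivity)] at this
      exact this
    have hlt : D / (1 + ε') < D := div_lt_self (by linarith) (by linarith)
    obtain ⟨d, hdmem, hdgt⟩ := exists_lt_of_lt_csSup ⟨1, hmem1⟩ hlt
    obtain ⟨t, rfl⟩ := hdmem
    have hdivpos : 0 < D / (1 + ε') := div_pos (by linarith) (by linarith)
    have hdet_pos : 0 < |(A t).det| := hdivpos.trans hdgt
    have hdet_ne : (A t).det ≠ 0 := fun h => by simp [h] at hdet_pos
    -- the tuple xs
    set xs : Fin N → V := fun i =>
      if h : (i : ℕ) < n then ((t ⟨i, h⟩ : X) : V) else hne.choose with hxs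
    have hxsmem : ∀ i, xs i ∈ X := by
      intro i
      rw [hxs]
      dsimp only
      split_ifs with h
      · exact (t ⟨i, h⟩).2
      · exact hne.choose_spec
    have htxs : ∀ j : Fin n, ((t j : X) : V) ∈ Set.range xs := by
      intro j
      refine ⟨⟨(j : ℕ), lt_of_lt_of_le j.2 hnN⟩, ?_⟩
      rw [hxs]
      dsimp only
      rw [dif_pos j.2]
    refine ⟨xs, hxsmem, ?_⟩
    intro x hx
    set xX : X := ⟨x, hx⟩ with hxX
    set v : Fin n → ℝ := B.equivFun (p xX) with hv
    set c : Fin n → ℝ := ((A t).det)⁻¹ • Matrix.cramer (A t) v with hc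
    have hmv : (A t) *ᵥ c = v := by
      rw [hc, Matrix.mulVec_smul, Matrix.mulVec_cramer, smul_smul,
        inv_mul_cancel₀ hdet_ne, one_smul]
    have hrep : p xX = ∑ j, c j • p (t j) := by
      apply B.equivFun.injective
      ext i
      rw [show B.equivFun (p xX) = v from rfl, ← hmv]
      simp only [map_sum, _root_.map_smul]
      simp [Matrix.mulVec, dotProduct, hA, mul_comm]
    have hcbound : ∀ j, |c j| ≤ 1 + ε' := by
      intro j
      have h1 : |Matrix.cramer (A t) v j| ≤ D := by
        rw [Matrix.cramer_apply]
        have hupd : A (Function.update t j xX) = (A t).updateCol j v := by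
          ext i j'
          rw [Matrix.updateCol_apply]
          by_cases hj : j' = j <;> simp [hA, Function.update_apply, hj, hv, Basis.equivFun_apply]
        refine le_csSup hbdd ⟨Function.update t j xX, ?_⟩
        show |(A (Function.update t j xX)).det| = _
        rw [hupd]
      have h2 : |c j| = |Matrix.cramer (A t) v j| / |(A t).det| := by
        rw [hc]
        simp [abs_mul, abs_inv, div_eq_inv_mul]
      rw [h2, div_le_iff₀ hdet_pos]
      have hdgt' : D < |(A t).det| * (1 + ε') := (div_lt_iff₀ (by linarith)).mp hdgt
      nlinarith
    set y : V := ∑ j, c j • ((t j : X) : V) with hy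
    have hymem : y ∈ (Submodule.span ℝ (Set.range xs) : Submodule ℝ V) := by
      refine Submodule.sum_mem _ fun j _ => Submodule.smul_mem _ _ (subset_span (htxs j))
    have hcoe : ((p xX : V)) = ∑ j, c j • ((p (t j) : V)) := by
      rw [hrep]
      push_cast
      rfl
    have hxy : x - y = ((x : V) - (p xX : V)) + ∑ j, c j • (((p (t j)) : V) - ((t j : X) : V)) := by
      have h2 : ∑ j, c j • (((p (t j)) : V) - ((t j : X) : V)) = (p xX : V) - y := by
        rw [hcoe, hy, ← Finset.sum_sub_distrib]
        exact Finset.sum_congr rfl fun j _ => smul_sub _ _ _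
      rw [h2]
      abel
    have hnormxy : ‖x - y‖ ≤ (r + ε) + (n : ℝ) * ((1 + ε') * (r + ε)) := by
      rw [hxy]
      refine le_trans (norm_add_le _ _) (add_le_add (hp xX).le ?_)
      refine le_trans (norm_sum_le _ _) ?_
      have hterm : ∀ j : Fin n, ‖c j • (((p (t j)) : V) - ((t j : X) : V))‖ ≤ (1 + ε') * (r + ε) := by
        intro j
        rw [norm_smul, Real.norm_eq_abs]
        refine mul_le_mul (hcbound j) ?_ (norm_nonneg _) (by linarith)
        rw [norm_sub_rev]
        exact (hp (t j)).le
      calc ∑ j, ‖c j • (((p (t j)) : V) - ((t j : X) : V))‖ ≤ ∑ _j : Fin n, (1 + ε') * (r + ε) :=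
            Finset.sum_le_sum fun j _ => hterm j
        _ = (n : ℝ) * ((1 + ε') * (r + ε)) := by
            rw [Finset.sum_const, Finset.card_univ, Fintype.card_fin, nsmul_eq_mul]
    have hfinal : (r + ε) + (n : ℝ) * ((1 + ε') * (r + ε)) ≤ ((n : ℝ) + 1) * r + δ :=
      width_arith hr hεpos hε1 hε'pos hε'1 (Nat.cast_nonneg n) hnN' hε2 hε'2
    calc Metric.infDist x ((Submodule.span ℝ (Set.range xs) : Submodule ℝ V) : Set V)
        ≤ dist x y := Metric.infDist_le_dist_of_mem hymem
      _ = ‖x - y‖ := dist_eq_norm _ _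
      _ ≤ (r + ε) + (n : ℝ) * ((1 + ε') * (r + ε)) := hnormxy
      _ ≤ ((n : ℝ) + 1) * r + δ := hfinal

/-- Theorem: the inner `N`-width is controlled by the
Kolmogorov `N`-width: `W̄_N(X) ≤ (N+1) W_N(X)`. -/
theorem inner_width_le (V : Type*) [NormedAddCommGroup V] [NormedSpace ℝ V]
    (N : ℕ) (hN : 1 ≤ N) (X : Set V) (hne : X.Nonempty) (hX : IsCompact X) :
    innerWidth V N X ≤ ((N : ℝ) + 1) * kolWidth V N X := by
  classical
  haveI : Nonempty X := hne.to_subtype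
  obtain ⟨C, hC⟩ := isBounded_iff_forall_norm_le.mp hX.isBounded
  set K : Set ℝ := {r : ℝ | ∃ S : Submodule ℝ V, FiniteDimensional ℝ S ∧
    Module.finrank ℝ S ≤ N ∧
    r = ⨆ x : X, Metric.infDist (x : V) (S : Set V)} with hK
  have hkol : kolWidth V N X = sInf K := rfl
  set Kin : Set ℝ := {r : ℝ | ∃ xs : Fin N → V, (∀ i, xs i ∈ X) ∧
    r = ⨆ x : X, Metric.infDist (x : V)
      ((Submodule.span ℝ (Set.range xs) : Submodule ℝ V) : Set V)} with hKin
  have hin : innerWidth V N X = sInf Kin := rfl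
  have hKin_bdd : BddBelow Kin := by
    refine ⟨0, ?_⟩
    rintro rr ⟨xs, hxs, rfl⟩
    exact Real.iSup_nonneg fun x => Metric.infDist_nonneg
  have hKne : K.Nonempty := ⟨_, ⊥, inferInstance, by simp, rfl⟩
  have key : ∀ rr ∈ K, innerWidth V N X ≤ ((N : ℝ) + 1) * rr := by
    rintro rr ⟨S, hfd, hrank, rfl⟩
    haveI := hfd
    set rS := ⨆ x : X, Metric.infDist (x : V) (S : Set V) with hrS
    have hbddA : BddAbove (Set.range fun x : X => Metric.infDist (x : V) (S : Set V)) := by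
      refine ⟨C, ?_⟩
      rintro _ ⟨x, rfl⟩
      refine le_trans (Metric.infDist_le_dist_of_mem S.zero_mem) ?_
      rw [dist_zero_right]
      exact hC x x.2
    have hrS0 : 0 ≤ rS := Real.iSup_nonneg fun x => Metric.infDist_nonneg
    have hleS : ∀ x ∈ X, Metric.infDist x (S : Set V) ≤ rS := fun x hx =>
      le_ciSup hbddA (⟨x, hx⟩ : X)
    refine le_of_forall_pos_le_add fun δ hδ => ?_
    obtain ⟨xs, hxs, hb⟩ := core_lemma hne hC N (Module.finrank ℝ S) hrank S hfd rfl
      rS hrS0 hleS δ hδ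
    have h1 : innerWidth V N X ≤ ⨆ x : X, Metric.infDist (x : V)
        ((Submodule.span ℝ (Set.range xs) : Submodule ℝ V) : Set V) :=
      csInf_le hKin_bdd ⟨xs, hxs, rfl⟩
    refine h1.trans (ciSup_le fun x => (hb x x.2).trans ?_)
    have hfr : (Module.finrank ℝ S : ℝ) ≤ N := by exact_mod_cast hrank
    have := mul_le_mul_of_nonneg_right (by linarith : (Module.finrank ℝ S : ℝ) + 1 ≤ (N : ℝ) + 1) hrS0
    linarith
  have h2 : innerWidth V N X / ((N : ℝ) + 1) ≤ sInf K := by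
    refine le_csInf hKne fun rr hrr => ?_
    rw [div_le_iff₀ (by positivity), mul_comm]
    exact key rr hrr
  rw [hkol]
  have := (div_le_iff₀ (by positivity : (0:ℝ) < (N : ℝ) + 1)).mp h2
  linarith
end
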